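/- Let p > 0 and let v : [1,∞) → [0,∞) be a C² nonincreasing convex solution of −v'' − ((d−1)/r) v' + C v^s = 0 on (1,∞), with s = (p−1)/(p+1) ∈ (−1,1), C > 0, d ≥ 1, such that v, v', v'' → 0 at infinity. Then −v'(r) ≥ (2C/(s+1))^{1/2} v(r)^{(s+1)/2} for all r ∈ (1,∞). -/

import Mathlib

open Filter Set

lemma stmt12_aux_deriv_nonpos {v : ℝ → ℝ} {x : ℝ} (hx : 1 < x)
    (hmono : AntitoneOn v (Set.Ici 1)) (hd : HasDerivAt v (deriv v x) x) :
    deriv v x ≤ 0 := by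
  have h : HasDerivWithinAt v (deriv v x) (Set.Ioi x) x := hd.hasDerivWithinAt
  rw [hasDerivWithinAt_iff_tendsto_slope] at h
  have hdiff : Set.Ioi x \ {x} = Set.Ioi x := Set.diff_singleton_eq_self (by simp)
  rw [hdiff] at h
  refine le_of_tendsto h ?_
  filter_upwards [self_mem_nhdsWithin] with y hy
  have hyx : x < y := hy
  have hvy : v y ≤ v x := hmono hx.le (hx.trans hyx).le hyx.le
  rw [slope_def_field, div_eq_inv_mul]
  have h1 : v y - v x ≤ 0 := by linarith
  have h2 : (0:ℝ) ≤ (y - x)⁻¹ := inv_nonneg.2 (by linarith)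
  exact mul_nonpos_of_nonneg_of_nonpos h2 h1

/-- ODE estimate. If `v ≥ 0` is a nonincreasing convex `C²` solution of
`−v'' − ((d−1)/r) v' + C v^s = 0` on `(1,∞)` with `v, v', v'' → 0` at infinity,
where `s = (p−1)/(p+1)`, then `−v'(r) ≥ (2C/(s+1))^{1/2} v(r)^{(s+1)/2}` on `(1,∞)`. -/
theorem stmt12 (d : ℕ) (hd : 1 ≤ d) (p C : ℝ) (hp : 0 < p) (hC : 0 < C)
    (v : ℝ → ℝ) (hsm : ContDiffOn ℝ 2 v (Set.Ici 1))
    (hpos : ∀ r ∈ Set.Ici (1 : ℝ), 0 ≤ v r)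
    (hmono : AntitoneOn v (Set.Ici 1))
    (hconv : ConvexOn ℝ (Set.Ici 1) v)
    (hode : ∀ r ∈ Set.Ioi (1 : ℝ),
      -(deriv (deriv v) r) - (((d : ℝ) - 1) / r) * deriv v r +
        C * v r ^ ((p - 1) / (p + 1)) = 0)
    (hv0 : Tendsto v atTop (nhds 0))
    (hv1 : Tendsto (deriv v) atTop (nhds 0))
    (hv2 : Tendsto (deriv (deriv v)) atTop (nhds 0)) :
    ∀ r ∈ Set.Ioi (1 : ℝ),
      Real.sqrt (2 * C / ((p - 1) / (p + 1) + 1)) *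
          v r ^ (((p - 1) / (p + 1) + 1) / 2) ≤ -(deriv v r) := by
  intro r hr
  have hr1 : (1:ℝ) < r := hr
  set s : ℝ := (p - 1) / (p + 1) with hs
  have hp1 : (0:ℝ) < p + 1 := by linarith
  have hs1 : 0 < s + 1 := by
    have hseq : s + 1 = 2 * p / (p + 1) := by rw [hs]; field_simp; ring
    rw [hseq]; positivity
  have hsm' : ContDiffOn ℝ 2 v (Set.Ioi 1) := hsm.mono Set.Ioi_subset_Ici_self
  have hder : ContDiffOn ℝ 1 (deriv v) (Set.Ioi 1) :=
    hsm'.deriv_of_isOpen isOpen_Ioi (by norm_num)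
  have hmemx : ∀ x : ℝ, 1 < x → Set.Ioi (1:ℝ) ∈ nhds x := fun x hx => isOpen_Ioi.mem_nhds hx
  have hdv : ∀ x : ℝ, 1 < x → HasDerivAt v (deriv v x) x := fun x hx =>
    ((hsm'.differentiableOn (by norm_num)).differentiableAt (hmemx x hx)).hasDerivAt
  have hdv2 : ∀ x : ℝ, 1 < x → HasDerivAt (deriv v) (deriv (deriv v) x) x := fun x hx =>
    ((hder.differentiableOn one_ne_zero).differentiableAt (hmemx x hx)).hasDerivAt
  have hv'le : ∀ x : ℝ, 1 < x → deriv v x ≤ 0 := fun x hx =>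
    stmt12_aux_deriv_nonpos hx hmono (hdv x hx)
  set E : ℝ → ℝ := fun x => (deriv v x)^2 / 2 - C / (s+1) * v x ^ (s+1) with hE
  have hEcont : ∀ x : ℝ, 1 < x → ContinuousAt E x := by
    intro x hx
    have h1 : ContinuousAt (deriv v) x := hder.continuousOn.continuousAt (hmemx x hx)
    have h2 : ContinuousAt v x := hsm'.continuousOn.continuousAt (hmemx x hx)
    exact ((h1.pow 2).div_const 2).sub (continuousAt_const.mul (h2.rpow_const (Or.inr hs1.le)))
  have hEderiv : ∀ x : ℝ, 1 < x → v x ≠ 0 →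
      HasDerivAt E (-(((d:ℝ)-1)/x) * (deriv v x)^2) x := by
    intro x hx hne
    have h1 : HasDerivAt (fun y => (deriv v y)^2 / 2) (deriv v x * deriv (deriv v) x) x := by
      have := ((hdv2 x hx).pow 2).div_const 2
      exact this.congr_deriv (by ring)
    have h2 : HasDerivAt (fun y => C/(s+1) * v y ^ (s+1))
        (C/(s+1) * (deriv v x * (s+1) * v x ^ (s+1-1))) x :=
      ((hdv x hx).rpow_const (Or.inl hne)).const_mul _
    have h3 := h1.sub h2
    refine h3.congr_deriv ?_
    have hodex := hode x hx
    have hcv : C * v x ^ s = deriv (deriv v) x + (((d:ℝ)-1)/x) * deriv v x := by linarith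
    have hss : s + 1 - 1 = s := by ring
    rw [hss]
    have hcancel : C/(s+1) * (deriv v x * (s+1) * v x ^ s) = (C * v x ^ s) * deriv v x := by
      field_simp
    rw [hcancel, hcv]
    ring
  have hE0 : 0 ≤ E r := by
    by_cases hz : ∃ x, r ≤ x ∧ v x = 0
    · obtain ⟨x0, hx0r, hx0⟩ := hz
      set S : Set ℝ := {x | r ≤ x ∧ v x = 0} with hSdef
      have hSne : S.Nonempty := ⟨x0, hx0r, hx0⟩
      have hSbdd : BddBelow S := ⟨r, fun y hy => hy.1⟩
      have hSclosed : IsClosed S := by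
        have hSeq : S = Set.Ici r ∩ v ⁻¹' {0} := by
          ext y; simp [hSdef, Set.mem_Ici]
        rw [hSeq]
        exact ContinuousOn.preimage_isClosed_of_isClosed
          (hsm.continuousOn.mono (fun y hy => le_trans hr1.le hy)) isClosed_Ici
          isClosed_singleton
      set r0 := sInf S with hr0def
      have hr0S : r0 ∈ S := hSclosed.csInf_mem hSne hSbdd
      have hr0r : r ≤ r0 := hr0S.1
      have hvr0 : v r0 = 0 := hr0S.2
      have hvpos : ∀ y, r ≤ y → y < r0 → 0 < v y := by
        intro y hy1 hy2
        rcases lt_or_eq_of_le (hpos y (le_trans hr1.le hy1)) with h | h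
        · exact h
        · exact absurd (csInf_le hSbdd ⟨hy1, h.symm⟩) (not_le.2 hy2)
      have hanti : AntitoneOn E (Set.Icc r r0) := by
        apply antitoneOn_of_deriv_nonpos (convex_Icc r r0)
        · intro y hy
          exact (hEcont y (lt_of_lt_of_le hr1 hy.1)).continuousWithinAt
        · intro y hy
          rw [interior_Icc] at hy
          exact ((hEderiv y (hr1.trans hy.1)
            (hvpos y hy.1.le hy.2).ne').differentiableAt).differentiableWithinAt
        · intro y hy
          rw [interior_Icc] at hy
          rw [(hEderiv y (hr1.trans hy.1) (hvpos y hy.1.le hy.2).ne').deriv]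
          have hy1 : (0:ℝ) < y := by linarith [hr1.trans hy.1]
          have hd1 : (1:ℝ) ≤ (d:ℝ) := by exact_mod_cast hd
          have : (0:ℝ) ≤ ((d:ℝ)-1)/y := div_nonneg (by linarith) hy1.le
          nlinarith [sq_nonneg (deriv v y)]
      have hEr0 : 0 ≤ E r0 := by
        simp only [hE, hvr0, Real.zero_rpow hs1.ne', mul_zero, sub_zero]
        positivity
      exact hEr0.trans (hanti ⟨le_refl r, hr0r⟩ ⟨hr0r, le_refl r0⟩ hr0r)
    · push_neg at hz
      have hanti : AntitoneOn E (Set.Ici r) := by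
        apply antitoneOn_of_deriv_nonpos (convex_Ici r)
        · intro y hy
          exact (hEcont y (lt_of_lt_of_le hr1 hy)).continuousWithinAt
        · intro y hy
          rw [interior_Ici] at hy
          exact ((hEderiv y (hr1.trans hy) (hz y hy.le)).differentiableAt).differentiableWithinAt
        · intro y hy
          rw [interior_Ici] at hy
          rw [(hEderiv y (hr1.trans hy) (hz y hy.le)).deriv]
          have hy1 : (0:ℝ) < y := by linarith [hr1.trans hy]
          have hd1 : (1:ℝ) ≤ (d:ℝ) := by exact_mod_cast hd
          have : (0:ℝ) ≤ ((d:ℝ)-1)/y := div_nonneg (by linarith) hy1.le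
          nlinarith [sq_nonneg (deriv v y)]
      have hEtend : Tendsto E atTop (nhds 0) := by
        have h1 : Tendsto (fun x => (deriv v x)^2/2) atTop (nhds 0) := by
          have := (hv1.pow 2).div_const 2
          simpa using this
        have h2 : Tendsto (fun x => C/(s+1) * v x ^ (s+1)) atTop (nhds 0) := by
          have hc : ContinuousAt (fun t : ℝ => t ^ (s+1)) 0 :=
            Real.continuousAt_rpow_const 0 (s+1) (Or.inr hs1.le)
          have h3 := hc.tendsto.comp hv0
          rw [Real.zero_rpow hs1.ne'] at h3
          have := h3.const_mul (C/(s+1))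
          simpa [Function.comp] using this
        have := h1.sub h2
        simpa using this
      refine le_of_tendsto hEtend ?_
      filter_upwards [eventually_ge_atTop r] with y hy
      exact hanti Set.self_mem_Ici (Set.mem_Ici.mpr hy) hy
  have hvr : 0 ≤ v r := hpos r hr1.le
  have hv'r : deriv v r ≤ 0 := hv'le r hr1
  have key : 2 * C / (s+1) * v r ^ (s+1) ≤ (-(deriv v r))^2 := by
    have hsq : (-(deriv v r))^2 = (deriv v r)^2 := by ring
    rw [hsq]
    simp only [hE] at hE0
    calc 2 * C / (s+1) * v r ^ (s+1) = 2 * (C/(s+1) * v r ^ (s+1)) := by ring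
      _ ≤ 2 * (deriv v r ^ 2 / 2) := by linarith
      _ = deriv v r ^ 2 := by ring
  have hrw : Real.sqrt (2*C/(s+1)) * v r ^ ((s+1)/2)
      = Real.sqrt (2*C/(s+1) * v r ^ (s+1)) := by
    rw [Real.sqrt_mul (by positivity)]
    congr 1
    rw [Real.sqrt_eq_rpow, ← Real.rpow_mul hvr, mul_one_div]
  rw [hrw]
  calc Real.sqrt (2*C/(s+1) * v r ^ (s+1)) ≤ Real.sqrt ((-(deriv v r))^2) :=
        Real.sqrt_le_sqrt key
    _ = -(deriv v r) := Real.sqrt_sq (by linarith)
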